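/- Let f : 2^V → ℝ≥0 be submodular and let M ⊆ OPT ⊆ V be constructed greedily so that, writing M(e) for the partial solution just before e was added, f(e' | M) ≤ f(e | M(e)) for every group i, every e' ∈ (OPT \ M) ∩ V_i, and every e ∈ M ∩ V_i. If κ = min_{i∈[m]} |M ∩ V_i| / |OPT ∩ V_i| (with each |OPT ∩ V_i| > 0), then f(OPT) ≤ (1 + 1/κ)·f(M), i.e., f(M) ≥ (κ/(1+κ))·f(OPT). -/

import Mathlib

private lemma tw_all {β : Type*} (p : β → Bool) :
    ∀ (L r : List β), (∀ x ∈ L, p x = true) →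
    (L ++ r).takeWhile p = L ++ r.takeWhile p := by
  intro L r h
  induction L with
  | nil => simp
  | cons b L ih =>
    have hb : p b = true := h b (by simp)
    simp only [List.cons_append, List.takeWhile_cons, hb, if_true, List.cons.injEq, true_and]
    exact ih (fun x hx => h x (List.mem_cons_of_mem _ hx))

private lemma tw_stop {β : Type*} (p : β → Bool) :
    ∀ (L : List β), (∃ x ∈ L, p x = false) → ∀ r,
    (L ++ r).takeWhile p = L.takeWhile p := by
  intro L
  induction L with
  | nil => rintro ⟨x, hx, _⟩; simp at hx
  | cons b L ih =>
    rintro ⟨x, hx, hpx⟩ r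
    by_cases hb : p b = true
    · simp only [List.cons_append, List.takeWhile_cons, hb, if_true, List.cons.injEq, true_and]
      apply ih ⟨x, ?_, hpx⟩
      rcases List.mem_cons.mp hx with h | h
      · subst h; rw [hb] at hpx; simp at hpx
      · exact h
    · simp only [Bool.not_eq_true] at hb
      simp [List.takeWhile_cons, hb]

private lemma submod_sum {β : Type*} [DecidableEq β] (f : Finset β → ℝ)
    (hsub : ∀ S T : Finset β, f (S ∪ T) + f (S ∩ T) ≤ f S + f T) (S : Finset β) :
    ∀ A : Finset β, f (S ∪ A) ≤ f S + ∑ e ∈ A, (f (insert e S) - f S) := by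
  intro A
  induction A using Finset.induction_on with
  | empty => simp
  | @insert a A ha ih =>
    rw [Finset.sum_insert ha]
    by_cases haS : a ∈ S
    · have h1 : S ∪ insert a A = S ∪ A := by
        ext x; simp only [Finset.mem_union, Finset.mem_insert]
        constructor
        · rintro (h | rfl | h) <;> [exact Or.inl h; exact Or.inl haS; exact Or.inr h]
        · rintro (h | h) <;> [exact Or.inl h; exact Or.inr (Or.inr h)]
      have h2 : insert a S = S := Finset.insert_eq_self.mpr haS
      rw [h1, h2]
      linarith
    · have hnotin : a ∉ S ∪ A := by simp [haS, ha]
      have key := hsub (insert a S) (S ∪ A)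
      have h1 : insert a S ∪ (S ∪ A) = S ∪ insert a A := by
        ext x; simp only [Finset.mem_union, Finset.mem_insert]; tauto
      have h2 : insert a S ∩ (S ∪ A) = S := by
        rw [Finset.insert_inter_of_notMem hnotin]
        exact Finset.inter_eq_left.mpr Finset.subset_union_left
      rw [h1, h2] at key
      linarith

private lemma telescope_sum {β : Type*} [DecidableEq β] (f : Finset β → ℝ) :
    ∀ (L : List β), L.Nodup →
    (L.map (fun e => f (insert e ((L.takeWhile (· ≠ e)).toFinset)) -
      f ((L.takeWhile (· ≠ e)).toFinset))).sum = f L.toFinset - f ∅ := by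
  intro L
  induction L using List.reverseRecOn with
  | nil => simp
  | append_singleton L' a ih =>
    intro hnd
    have hnd' : L'.Nodup := (List.nodup_append.mp hnd).1
    have haL' : a ∉ L' := by
      have h := hnd
      rw [List.nodup_append'] at h
      intro hm
      exact h.2.2 hm (List.mem_singleton_self a)
    -- takeWhile for e ∈ L'
    have htw1 : ∀ e ∈ L', (L' ++ [a]).takeWhile (· ≠ e) = L'.takeWhile (· ≠ e) := by
      intro e he
      exact tw_stop _ L' ⟨e, he, by simp⟩ [a]
    -- takeWhile for a
    have htw2 : (L' ++ [a]).takeWhile (· ≠ a) = L' := by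
      rw [tw_all _ L' [a] (fun x hx => by
        simp only [decide_eq_true_eq]; intro h; exact haL' (h ▸ hx))]
      simp
    rw [List.map_append, List.sum_append]
    have hmap : (L'.map (fun e => f (insert e (((L' ++ [a]).takeWhile (· ≠ e)).toFinset)) -
        f (((L' ++ [a]).takeWhile (· ≠ e)).toFinset))) =
        (L'.map (fun e => f (insert e ((L'.takeWhile (· ≠ e)).toFinset)) -
        f ((L'.takeWhile (· ≠ e)).toFinset))) := by
      apply List.map_congr_left
      intro e he
      rw [htw1 e he]
    rw [hmap, ih hnd']
    simp only [List.map_cons, List.map_nil, List.sum_cons, List.sum_nil, htw2]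
    have : (L' ++ [a]).toFinset = insert a L'.toFinset := by
      rw [List.toFinset_append, Finset.union_comm]
      simp
    rw [this]
    ring

theorem greedy_half_approx {β : Type*} [DecidableEq β] {m : ℕ}
    (Vg : Fin m → Finset β)
    (hdisj : ∀ i j, i ≠ j → Disjoint (Vg i) (Vg j))
    (f : Finset β → ℝ)
    (hsub : ∀ S T : Finset β, f (S ∪ T) + f (S ∩ T) ≤ f S + f T)
    (hnonneg : ∀ S : Finset β, 0 ≤ f S)
    (OPT : Finset β) (hcover : ∀ e ∈ OPT, ∃ i, e ∈ Vg i)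
    (L : List β) (hnd : L.Nodup) (hML : L.toFinset ⊆ OPT)
    (Mb : β → Finset β)
    (hMb : ∀ e ∈ L, Mb e = (L.takeWhile (· ≠ e)).toFinset)
    (hpos : ∀ e ∈ L, 0 ≤ f (insert e (Mb e)) - f (Mb e))
    (hgreedy : ∀ i, ∀ e' ∈ (OPT \ L.toFinset) ∩ Vg i, ∀ e ∈ L.toFinset ∩ Vg i,
      f (insert e' L.toFinset) - f L.toFinset ≤ f (insert e (Mb e)) - f (Mb e))
    (κ : ℝ) (hκ : 0 < κ)
    (hcard : ∀ i, 0 < (OPT ∩ Vg i).card)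
    (hκle : ∀ i, κ ≤ ((L.toFinset ∩ Vg i).card : ℝ) / ((OPT ∩ Vg i).card : ℝ)) :
    f OPT ≤ (1 + 1 / κ) * f L.toFinset ∧
    κ / (1 + κ) * f OPT ≤ f L.toFinset := by
  set M := L.toFinset with hM
  set t := fun e' => f (insert e' M) - f M with ht
  set g := fun e => f (insert e (Mb e)) - f (Mb e) with hg
  -- partition lemma
  have partition : ∀ (S : Finset β), S ⊆ OPT → ∀ (h : β → ℝ),
      ∑ e ∈ S, h e = ∑ i, ∑ e ∈ S ∩ Vg i, h e := by
    intro S hS h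
    have hS' : S = Finset.univ.biUnion (fun i => S ∩ Vg i) := by
      ext e
      simp only [Finset.mem_biUnion, Finset.mem_univ, Finset.mem_inter, true_and]
      constructor
      · intro he
        obtain ⟨i, hi⟩ := hcover e (hS he)
        exact ⟨i, he, hi⟩
      · rintro ⟨i, he, _⟩; exact he
    conv_lhs => rw [hS']
    rw [Finset.sum_biUnion]
    intro i _ j _ hij
    exact (hdisj i j hij).mono Finset.inter_subset_right Finset.inter_subset_right
  -- telescoping
  have htel : ∑ e ∈ M, g e = f M - f ∅ := by
    rw [hM]
    rw [List.sum_toFinset _ hnd]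
    have : L.map g = L.map (fun e => f (insert e ((L.takeWhile (· ≠ e)).toFinset)) -
        f ((L.takeWhile (· ≠ e)).toFinset)) := by
      apply List.map_congr_left
      intro e he
      simp only [hg, hMb e he]
    rw [this, telescope_sum f L hnd]
  -- per-group key inequality
  have key : ∀ i, κ * (∑ e' ∈ (OPT \ M) ∩ Vg i, t e') ≤ ∑ e ∈ M ∩ Vg i, g e := by
    intro i
    set Oi := (OPT \ M) ∩ Vg i with hOi
    set Mi := M ∩ Vg i with hMi
    have hg0 : 0 ≤ ∑ e ∈ Mi, g e := by
      apply Finset.sum_nonneg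
      intro e he
      exact hpos e (List.mem_toFinset.mp (Finset.mem_inter.mp he).1)
    have hdouble : ((Mi.card : ℝ)) * (∑ e' ∈ Oi, t e') ≤ ((Oi.card : ℝ)) * (∑ e ∈ Mi, g e) := by
      calc ((Mi.card : ℝ)) * (∑ e' ∈ Oi, t e')
          = ∑ e' ∈ Oi, ∑ _e ∈ Mi, t e' := by
            rw [Finset.mul_sum]
            congr 1
            funext e'
            rw [Finset.sum_const, nsmul_eq_mul]
        _ ≤ ∑ e' ∈ Oi, ∑ e ∈ Mi, g e := by
            apply Finset.sum_le_sum
            intro e' he'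
            apply Finset.sum_le_sum
            intro e he
            exact hgreedy i e' he' e he
        _ = (Oi.card : ℝ) * (∑ e ∈ Mi, g e) := by
            rw [Finset.sum_const, nsmul_eq_mul]
    have hOc : (0:ℝ) < ((OPT ∩ Vg i).card : ℝ) := by exact_mod_cast hcard i
    have hκn : κ * ((OPT ∩ Vg i).card : ℝ) ≤ (Mi.card : ℝ) := by
      have := hκle i
      rw [le_div_iff₀ hOc] at this
      exact this
    have hOiOc : ((Oi.card : ℝ)) ≤ ((OPT ∩ Vg i).card : ℝ) := by
      have : Oi ⊆ OPT ∩ Vg i := by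
        intro x hx
        rw [hOi, Finset.mem_inter, Finset.mem_sdiff] at hx
        exact Finset.mem_inter.mpr ⟨hx.1.1, hx.2⟩
      exact_mod_cast Finset.card_le_card this
    have hκc : κ * (Oi.card : ℝ) ≤ (Mi.card : ℝ) := by nlinarith
    rcases le_or_gt (∑ e' ∈ Oi, t e') 0 with hts | hts
    · nlinarith
    · have hcpos : 0 < (Oi.card : ℝ) := by
        by_contra h
        push_neg at h
        have h0 : Oi.card = 0 := by exact_mod_cast le_antisymm (by exact_mod_cast h) (Nat.zero_le _)
        have : Oi = ∅ := Finset.card_eq_zero.mp h0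
        rw [this] at hts
        simp at hts
      nlinarith [mul_le_mul_of_nonneg_right hκc hts.le]
  -- submodularity bound
  have hunion : M ∪ (OPT \ M) = OPT := Finset.union_sdiff_of_subset hML
  have h1 : f OPT ≤ f M + ∑ e' ∈ OPT \ M, t e' := by
    have := submod_sum f hsub M (OPT \ M)
    rwa [hunion] at this
  -- combine
  have hsdiff : (OPT \ M) ⊆ OPT := Finset.sdiff_subset
  have hsum : κ * (∑ e' ∈ OPT \ M, t e') ≤ f M - f ∅ := by
    rw [partition (OPT \ M) hsdiff t, ← htel, partition M hML g, Finset.mul_sum]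
    exact Finset.sum_le_sum (fun i _ => key i)
  have hf0 : 0 ≤ f ∅ := hnonneg ∅
  have hfM : 0 ≤ f M := hnonneg M
  have h2 : ∑ e' ∈ OPT \ M, t e' ≤ f M / κ := by
    rw [le_div_iff₀ hκ]
    nlinarith
  have hmain : f OPT ≤ (1 + 1 / κ) * f M := by
    have heq : (1 + 1 / κ) * f M = f M + f M / κ := by
      field_simp
    linarith
  refine ⟨hmain, ?_⟩
  have hκ1 : 0 < 1 + κ := by linarith
  have hnn : 0 ≤ κ / (1 + κ) := by positivity
  have := mul_le_mul_of_nonneg_left hmain hnn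
  have heq2 : κ / (1 + κ) * ((1 + 1 / κ) * f M) = f M := by
    field_simp
    ring
  linarith [heq2 ▸ this]
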